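/- arXiv:0710.3792 — 2 statements merged into one kernel-verified Lean document; each statement's English description precedes it below -/
import Mathlib

section
/- Let (X,μ) be a weighted graph with bounded row sums, fix x₀, x ∈ X and λ > 0, and define H(t) := e^{−t} ∑_{n=0}^∞ μ^{(n)}(x₀,x) (λt)^n / n! for t ≥ 0 (this equals the expected number of particles at site x at time t of the λ-branching random walk on (X,μ) started from a single particle at x₀). If λ · limsup_{n→∞} (μ^{(n)}(x₀,x))^{1/n} < 1 (i.e. λ < R_μ), then H(t) → 0 as t → +∞. -/
open Filter MeasureTheory ProbabilityTheory
open scoped ENNReal NNReal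

/-- `n`-step weights (matrix powers) of a weight kernel `μ` on a countable set. -/
noncomputable def matPow {X : Type*} [DecidableEq X] (μ : X → X → ℝ≥0∞) :
    ℕ → X → X → ℝ≥0∞
  | 0, x, y => if x = y then 1 else 0
  | n + 1, x, y => ∑' z, matPow μ n x z * μ z y

/-- `(X, μ)` has bounded row sums. -/
def bddRows {X : Type*} (μ : X → X → ℝ≥0∞) : Prop :=
  ∃ K : ℝ≥0∞, K ≠ ⊤ ∧ ∀ x, ∑' y, μ x y ≤ K

/-- `(X, μ)` is connected. -/
def connectedW {X : Type*} [DecidableEq X] (μ : X → X → ℝ≥0∞) : Prop :=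
  ∀ x y, ∃ n, 0 < n ∧ 0 < matPow μ n x y

/-- `limsup_n (μ^{(n)}(x,y))^{1/n}`, the reciprocal of the convergence parameter. -/
noncomputable def lsRoot {X : Type*} [DecidableEq X] (μ : X → X → ℝ≥0∞) (x y : X) : ℝ≥0∞ :=
  Filter.limsup (fun n : ℕ => matPow μ n x y ^ (n : ℝ)⁻¹) Filter.atTop

/-- The convergence parameter `R = 1 / limsup_n (μ^{(n)}(x,y))^{1/n}`. -/
noncomputable def convR {X : Type*} [DecidableEq X] (μ : X → X → ℝ≥0∞) (x y : X) : ℝ≥0∞ :=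
  (lsRoot μ x y)⁻¹

open Classical in
/-- Restriction of a weight kernel to a subset (extended by `0`). -/
noncomputable def restrictW {X : Type*} (μ : X → X → ℝ≥0∞) (A : Set X) : X → X → ℝ≥0∞ :=
  fun x y => if x ∈ A ∧ y ∈ A then μ x y else 0
/-- The expected number of particles at site `x` at time `t` of the `λ`-branching random
walk on `(X, μ)` started from one particle at `x₀`:
`H(t) = e^{-t} ∑_{n} μ^{(n)}(x₀, x) (λ t)^n / n!`. -/
noncomputable def expParticles {X : Type*} [DecidableEq X] (μ : X → X → ℝ≥0∞)
    (lam : ℝ) (x₀ x : X) (t : ℝ) : ℝ≥0∞ :=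
  ENNReal.ofReal (Real.exp (-t)) *
    ∑' n : ℕ, matPow μ n x₀ x * ENNReal.ofReal (lam * t) ^ n / (Nat.factorial n : ℝ≥0∞)


lemma matPow_rowsum_le {X : Type*} [DecidableEq X] (μ : X → X → ℝ≥0∞) {K : ℝ≥0∞}
    (hK : ∀ x, ∑' y, μ x y ≤ K) (n : ℕ) (x : X) : ∑' y, matPow μ n x y ≤ K ^ n := by
  induction n generalizing x with
  | zero =>
    have : (∑' y, matPow μ 0 x y) = 1 := by
      rw [tsum_eq_single x]
      · simp [matPow]
      · intro y hy; simp [matPow, Ne.symm hy]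
    simp [this]
  | succ n ih =>
    calc ∑' y, matPow μ (n+1) x y = ∑' y, ∑' z, matPow μ n x z * μ z y := rfl
      _ = ∑' z, ∑' y, matPow μ n x z * μ z y := ENNReal.tsum_comm
      _ = ∑' z, matPow μ n x z * ∑' y, μ z y := by
          simp only [ENNReal.tsum_mul_left]
      _ ≤ ∑' z, matPow μ n x z * K :=
          ENNReal.tsum_le_tsum fun z => mul_le_mul_right (hK z) _
      _ = (∑' z, matPow μ n x z) * K := ENNReal.tsum_mul_right
      _ ≤ K ^ n * K := mul_le_mul_left (ih x) K
      _ = K ^ (n+1) := (pow_succ K n).symm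

/-- Lemma 5.2, subcritical part: if `λ · limsup_n (μ^{(n)}(x₀,x))^{1/n} < 1`
(i.e. `λ < R_μ`) then the expected number of particles at `x` tends to `0`. -/
theorem expParticles_tendsto_zero_of_subcritical
    {X : Type*} [Countable X] [DecidableEq X]
    (μ : X → X → ℝ≥0∞) (hbdd : bddRows μ)
    (x₀ x : X) (lam : ℝ) (hlam : 0 < lam)
    (hsub : ENNReal.ofReal lam * lsRoot μ x₀ x < 1) :
    Tendsto (expParticles μ lam x₀ x) atTop (nhds (0 : ℝ≥0∞)) := by
  classical
  obtain ⟨K, hKtop, hK⟩ := hbdd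
  set a : ℕ → ℝ≥0∞ := fun n => matPow μ n x₀ x with ha
  have hafin : ∀ n, a n ≠ ⊤ := fun n =>
    ne_top_of_le_ne_top (ENNReal.pow_ne_top hKtop)
      ((ENNReal.le_tsum x).trans (matPow_rowsum_le μ hK n x₀))
  have hlam0 : ENNReal.ofReal lam ≠ 0 := (ENNReal.ofReal_pos.mpr hlam).ne'
  have hlamt : ENNReal.ofReal lam ≠ ⊤ := ENNReal.ofReal_ne_top
  -- choose r strictly between max(λ·L, 1/2) and 1
  have hs : max (ENNReal.ofReal lam * lsRoot μ x₀ x) (1/2 : ℝ≥0∞) < 1 := by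
    apply max_lt hsub
    rw [ENNReal.div_lt_iff (by norm_num) (by norm_num)]
    norm_num
  obtain ⟨r, hsr, hr1⟩ := exists_between hs
  have hr0 : r ≠ 0 := by
    intro h; rw [h] at hsr
    exact (not_lt_of_ge zero_le) (lt_of_le_of_lt (le_max_right _ _) hsr)
  have hrt : r ≠ ⊤ := hr1.ne_top
  set ρ : ℝ := r.toReal with hρ
  have hρr : ENNReal.ofReal ρ = r := ENNReal.ofReal_toReal hrt
  have hρ0 : 0 < ρ := ENNReal.toReal_pos hr0 hrt
  have hρ1 : ρ < 1 := by
    have := ENNReal.toReal_lt_toReal hrt (by norm_num : (1:ℝ≥0∞) ≠ ⊤) |>.mpr hr1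
    simpa using this
  -- eventually a n * λ^n ≤ r^n
  have hls : lsRoot μ x₀ x < r / ENNReal.ofReal lam := by
    rw [ENNReal.lt_div_iff_mul_lt (Or.inl hlam0) (Or.inl hlamt)]
    rw [mul_comm]
    exact lt_of_le_of_lt (le_max_left _ _) hsr
  have hev : ∀ᶠ n : ℕ in atTop,
      matPow μ n x₀ x ^ (n : ℝ)⁻¹ < r / ENNReal.ofReal lam :=
    eventually_lt_of_limsup_lt hls
  obtain ⟨N₀, hN₀⟩ := (hev.and (eventually_ge_atTop 1)).exists_forall_of_atTop
  set N := N₀ + 1 with hN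
  have key : ∀ n, N ≤ n → a n * ENNReal.ofReal lam ^ n ≤ r ^ n := by
    intro n hn
    have hn' := hN₀ n (le_trans (Nat.le_succ N₀) hn)
    have hn1 : 1 ≤ n := hn'.2
    have hne : (n : ℝ) ≠ 0 := Nat.cast_ne_zero.mpr (by omega)
    have han : a n = (a n ^ (n : ℝ)⁻¹) ^ n := by
      rw [← ENNReal.rpow_natCast (a n ^ (n : ℝ)⁻¹) n, ← ENNReal.rpow_mul,
        inv_mul_cancel₀ hne, ENNReal.rpow_one]
    calc a n * ENNReal.ofReal lam ^ n
        = (a n ^ (n : ℝ)⁻¹) ^ n * ENNReal.ofReal lam ^ n := by rw [← han]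
      _ ≤ (r / ENNReal.ofReal lam) ^ n * ENNReal.ofReal lam ^ n :=
          mul_le_mul_left (pow_le_pow_left' hn'.1.le n) _
      _ = r ^ n / ENNReal.ofReal lam ^ n * ENNReal.ofReal lam ^ n := by
          rw [div_eq_mul_inv, mul_pow, ← ENNReal.inv_pow, ← div_eq_mul_inv]
      _ = r ^ n := ENNReal.div_mul_cancel (pow_ne_zero n hlam0) (ENNReal.pow_ne_top hlamt)
  set C : ℝ≥0∞ := (∑ n ∈ Finset.range N, a n * ENNReal.ofReal lam ^ n / r ^ n) + 1 with hC
  have hCt : C ≠ ⊤ := by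
    rw [hC]
    refine ENNReal.add_ne_top.mpr ⟨?_, by norm_num⟩
    refine (ENNReal.sum_lt_top.mpr fun n _ => ?_).ne
    exact ENNReal.div_lt_top
      (ENNReal.mul_ne_top (hafin n) (ENNReal.pow_ne_top hlamt)) (pow_ne_zero n hr0)
  have hC1 : 1 ≤ C := le_add_self
  have hCbound : ∀ n, a n * ENNReal.ofReal lam ^ n ≤ C * r ^ n := by
    intro n
    rcases lt_or_ge n N with h | h
    · have h1 : a n * ENNReal.ofReal lam ^ n / r ^ n ≤ C := by
        refine le_trans ?_ (le_self_add)
        exact Finset.single_le_sum (f := fun m => a m * ENNReal.ofReal lam ^ m / r ^ m)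
          (fun m _ => zero_le) (Finset.mem_range.mpr h)
      exact (ENNReal.div_le_iff (pow_ne_zero n hr0) (ENNReal.pow_ne_top hrt)).mp h1
    · calc a n * ENNReal.ofReal lam ^ n ≤ r ^ n := key n h
        _ = 1 * r ^ n := (one_mul _).symm
        _ ≤ C * r ^ n := mul_le_mul_left hC1 _
  -- the exponential series in ℝ≥0∞
  have hexp : ∀ s : ℝ, 0 ≤ s →
      (∑' n : ℕ, ENNReal.ofReal s ^ n / (Nat.factorial n : ℝ≥0∞)) =
        ENNReal.ofReal (Real.exp s) := by
    intro s hs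
    have h1 : ∀ n : ℕ, ENNReal.ofReal s ^ n / (Nat.factorial n : ℝ≥0∞) =
        ENNReal.ofReal (s ^ n / (Nat.factorial n : ℝ)) := by
      intro n
      rw [ENNReal.ofReal_div_of_pos (by positivity), ENNReal.ofReal_pow hs,
        ENNReal.ofReal_natCast]
    simp only [h1]
    rw [← ENNReal.ofReal_tsum_of_nonneg (fun n => by positivity)
      (Real.summable_pow_div_factorial s)]
    congr 1
    rw [Real.exp_eq_exp_ℝ, NormedSpace.exp_eq_tsum_div]
  -- eventual upper bound
  have hub : ∀ᶠ t in atTop, expParticles μ lam x₀ x t ≤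
      C * ENNReal.ofReal (Real.exp ((ρ - 1) * t)) := by
    filter_upwards [eventually_ge_atTop (0:ℝ)] with t ht
    have hsumle : (∑' n : ℕ, matPow μ n x₀ x * ENNReal.ofReal (lam * t) ^ n /
        (Nat.factorial n : ℝ≥0∞)) ≤ C * ENNReal.ofReal (Real.exp (ρ * t)) := by
      calc (∑' n : ℕ, matPow μ n x₀ x * ENNReal.ofReal (lam * t) ^ n /
            (Nat.factorial n : ℝ≥0∞))
          ≤ ∑' n : ℕ, C * (ENNReal.ofReal (ρ * t) ^ n / (Nat.factorial n : ℝ≥0∞)) := by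
            refine ENNReal.tsum_le_tsum fun n => ?_
            have h2 : matPow μ n x₀ x * ENNReal.ofReal (lam * t) ^ n ≤
                C * ENNReal.ofReal (ρ * t) ^ n := by
              rw [ENNReal.ofReal_mul hlam.le, ENNReal.ofReal_mul hρ0.le, hρr,
                mul_pow, mul_pow, ← mul_assoc, ← mul_assoc]
              exact mul_le_mul_left (hCbound n) _
            rw [← mul_div_assoc]
            exact ENNReal.div_le_div h2 le_rfl
        _ = C * ∑' n : ℕ, ENNReal.ofReal (ρ * t) ^ n / (Nat.factorial n : ℝ≥0∞) :=
            ENNReal.tsum_mul_left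
        _ = C * ENNReal.ofReal (Real.exp (ρ * t)) := by
            rw [hexp (ρ * t) (by positivity)]
    calc expParticles μ lam x₀ x t
        ≤ ENNReal.ofReal (Real.exp (-t)) * (C * ENNReal.ofReal (Real.exp (ρ * t))) :=
          mul_le_mul_right hsumle _
      _ = C * (ENNReal.ofReal (Real.exp (-t)) * ENNReal.ofReal (Real.exp (ρ * t))) := by
          ring
      _ = C * ENNReal.ofReal (Real.exp ((ρ - 1) * t)) := by
          rw [← ENNReal.ofReal_mul (Real.exp_nonneg _), ← Real.exp_add,
            show -t + ρ * t = (ρ - 1) * t from by ring]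
  -- the bound tends to 0
  have hlim : Tendsto (fun t : ℝ => C * ENNReal.ofReal (Real.exp ((ρ - 1) * t)))
      atTop (nhds 0) := by
    have h1 : Tendsto (fun t : ℝ => (ρ - 1) * t) atTop atBot :=
      Tendsto.const_mul_atTop_of_neg (by linarith) tendsto_id
    have h2 : Tendsto (fun t : ℝ => Real.exp ((ρ - 1) * t)) atTop (nhds 0) :=
      Real.tendsto_exp_atBot.comp h1
    have h3 := ENNReal.tendsto_ofReal (m := fun t : ℝ => Real.exp ((ρ - 1) * t)) h2
    rw [ENNReal.ofReal_zero] at h3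
    have h4 := ENNReal.Tendsto.const_mul (a := C) h3 (Or.inr hCt)
    simpa using h4
  exact tendsto_of_tendsto_of_tendsto_of_le_of_le' tendsto_const_nhds hlim
    (Eventually.of_forall fun t => zero_le) hub
end

section
/- Let (X,μ) be a connected weighted graph with bounded row sums and convergence parameter R_μ, let λ > R_μ, and let (x_0,y_0), (x_1,y_1), …, (x_l,y_l) be a finite collection of pairs of vertices of X. Then there exists t = t(λ) > 0 such that e^{−t} ∑_{n=0}^∞ μ^{(n)}(x_j,y_j) (λt)^n / n! > 1 for every j = 0,1,…,l; that is, the expected number of particles at y_j at time t of the λ-branching random walk started from one particle at x_j exceeds 1 simultaneously for all j. -/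
open Filter MeasureTheory ProbabilityTheory
open scoped ENNReal NNReal

section Aux
open scoped Nat

lemma matPow_add {X : Type*} [DecidableEq X] (μ : X → X → ℝ≥0∞) (m n : ℕ) (x y : X) :
    matPow μ (m + n) x y = ∑' z, matPow μ m x z * matPow μ n z y := by
  induction n generalizing y with
  | zero =>
    rw [Nat.add_zero, tsum_eq_single y]
    · simp [matPow]
    · intro z hz
      simp [matPow, hz]
  | succ n ih =>
    show matPow μ ((m + n) + 1) x y = _
    have L : matPow μ ((m + n) + 1) x y = ∑' z, matPow μ (m + n) x z * μ z y := rfl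
    have R : ∀ w, matPow μ (n + 1) w y = ∑' z, matPow μ n w z * μ z y := fun _ => rfl
    rw [L]
    simp only [ih, R]
    calc ∑' z, (∑' w, matPow μ m x w * matPow μ n w z) * μ z y
        = ∑' z, ∑' w, matPow μ m x w * matPow μ n w z * μ z y := by
          congr 1; ext z; rw [ENNReal.tsum_mul_right]
      _ = ∑' w, ∑' z, matPow μ m x w * (matPow μ n w z * μ z y) := by
          rw [ENNReal.tsum_comm]; simp_rw [mul_assoc]
      _ = ∑' w, matPow μ m x w * ∑' z, matPow μ n w z * μ z y := by
          congr 1; ext w; rw [ENNReal.tsum_mul_left]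

lemma le_matPow_add {X : Type*} [DecidableEq X] (μ : X → X → ℝ≥0∞) (m n : ℕ) (x z y : X) :
    matPow μ m x z * matPow μ n z y ≤ matPow μ (m + n) x y := by
  rw [matPow_add]
  exact ENNReal.le_tsum z

lemma fact_mul_exp_le (n : ℕ) (hn : 1 ≤ n) :
    (n ! : ℝ) * Real.exp ((n : ℝ) - 1) ≤ (n : ℝ) ^ (n + 1) := by
  induction n, hn using Nat.le_induction with
  | base => simp
  | succ n hn ih =>
    have hn0 : (0:ℝ) < n := by exact_mod_cast hn
    have key : ((n:ℝ)/((n:ℝ)+1))^(n+1) ≤ Real.exp (-1) := by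
      have h := Real.add_one_le_exp (-(1/((n:ℝ)+1)))
      have h0 : (n:ℝ)/((n:ℝ)+1) = -(1/((n:ℝ)+1)) + 1 := by field_simp; ring
      calc ((n:ℝ)/((n:ℝ)+1))^(n+1) ≤ (Real.exp (-(1/((n:ℝ)+1))))^(n+1) := by
            apply pow_le_pow_left₀ (by positivity) (by rw [h0]; exact h)
        _ = Real.exp (-1) := by
            rw [← Real.exp_nat_mul]
            congr 1
            field_simp
            push_cast
            ring
    have key2 : (n:ℝ)^(n+1) * Real.exp 1 ≤ ((n:ℝ)+1)^(n+1) := by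
      rw [div_pow, Real.exp_neg, div_le_iff₀ (by positivity)] at key
      calc (n:ℝ)^(n+1) * Real.exp 1 ≤ ((Real.exp 1)⁻¹ * ((n:ℝ)+1)^(n+1)) * Real.exp 1 :=
            mul_le_mul_of_nonneg_right key (Real.exp_pos 1).le
        _ = ((n:ℝ)+1)^(n+1) := by
            field_simp
    calc ((n+1)! : ℝ) * Real.exp ((↑(n+1) : ℝ) - 1)
        = ((n:ℝ)+1) * (((n !) : ℝ) * Real.exp ((n:ℝ) - 1)) * Real.exp 1 := by
          rw [Nat.factorial_succ]
          push_cast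
          rw [show ((n:ℝ)+1) - 1 = ((n:ℝ) - 1) + 1 by ring, Real.exp_add]
          ring
      _ ≤ ((n:ℝ)+1) * ((n:ℝ)^(n+1)) * Real.exp 1 := by
          apply mul_le_mul_of_nonneg_right _ (Real.exp_pos 1).le
          exact mul_le_mul_of_nonneg_left ih (by positivity)
      _ = ((n:ℝ)+1) * ((n:ℝ)^(n+1) * Real.exp 1) := by ring
      _ ≤ ((n:ℝ)+1) * ((n:ℝ)+1)^(n+1) := mul_le_mul_of_nonneg_left key2 (by positivity)
      _ = ((↑(n+1):ℝ)) ^ (n+1+1) := by push_cast; ring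

noncomputable def Pker {X : Type*} [DecidableEq X] (μ : X → X → ℝ≥0∞) (lam t : ℝ) (x y : X) : ℝ≥0∞ :=
  ENNReal.ofReal (Real.exp (-t)) *
    ∑' n : ℕ, matPow μ n x y * ENNReal.ofReal (lam * t) ^ n / (Nat.factorial n : ℝ≥0∞)

/-- reindexing equiv for the Cauchy product -/
def antidiagEquiv : (Σ N : ℕ, Fin (N + 1)) ≃ ℕ × ℕ where
  toFun p := (p.2.1, p.1 - p.2.1)
  invFun q := ⟨q.1 + q.2, ⟨q.1, Nat.lt_succ_of_le (Nat.le_add_right _ _)⟩⟩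
  left_inv := by
    rintro ⟨N, ⟨m, hm⟩⟩
    have hm' : m ≤ N := Nat.lt_succ_iff.mp hm
    have h1 : m + (N - m) = N := Nat.add_sub_cancel' hm'
    refine Sigma.ext (by simpa using h1) ?_
    rw [Fin.heq_ext_iff (by simpa using h1)]
  right_inv := by
    rintro ⟨a, b⟩
    simp

lemma fact_inv_eq {N m : ℕ} (hm : m ≤ N) :
    ((m ! : ℝ≥0∞))⁻¹ * (((N - m)! : ℝ≥0∞))⁻¹ =
      (N.choose m : ℝ≥0∞) * ((N ! : ℝ≥0∞))⁻¹ := by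
  have hN : (N.choose m) * m ! * (N - m)! = N ! := Nat.choose_mul_factorial_mul_factorial hm
  have c0 : (N.choose m : ℝ≥0∞) ≠ 0 := Nat.cast_ne_zero.mpr (Nat.choose_pos hm).ne'
  have ct : (N.choose m : ℝ≥0∞) ≠ ⊤ := ENNReal.natCast_ne_top _
  have f0 : ∀ k : ℕ, ((k ! : ℝ≥0∞)) ≠ 0 := fun k => Nat.cast_ne_zero.mpr k.factorial_ne_zero
  have ft : ∀ k : ℕ, ((k ! : ℝ≥0∞)) ≠ ⊤ := fun k => ENNReal.natCast_ne_top _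
  rw [← hN]
  push_cast
  rw [ENNReal.mul_inv (Or.inl (mul_ne_zero c0 (f0 m))) (Or.inl (ENNReal.mul_ne_top ct (ft m))),
    ENNReal.mul_inv (Or.inl c0) (Or.inl ct)]
  rw [← mul_assoc, ← mul_assoc, ENNReal.mul_inv_cancel c0 ct, one_mul]

lemma Pker_chapman {X : Type*} [DecidableEq X] (μ : X → X → ℝ≥0∞) (lam : ℝ)
    (hlam : 0 ≤ lam) {s t : ℝ} (hs : 0 ≤ s) (ht : 0 ≤ t) (x z y : X) :
    Pker μ lam s x z * Pker μ lam t z y ≤ Pker μ lam (s + t) x y := by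
  set u := ENNReal.ofReal (lam * s) with hu
  set v := ENNReal.ofReal (lam * t) with hv
  set A : ℕ → ℝ≥0∞ := fun m => matPow μ m x z * u ^ m / (m ! : ℝ≥0∞) with hA
  set B : ℕ → ℝ≥0∞ := fun n => matPow μ n z y * v ^ n / (n ! : ℝ≥0∞) with hB
  have hE : ENNReal.ofReal (Real.exp (-s)) * ENNReal.ofReal (Real.exp (-t)) =
      ENNReal.ofReal (Real.exp (-(s + t))) := by
    rw [← ENNReal.ofReal_mul (Real.exp_pos _).le, ← Real.exp_add]
    ring_nf
  have huv : ENNReal.ofReal (lam * (s + t)) = u + v := by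
    rw [hu, hv, ← ENNReal.ofReal_add (by positivity) (by positivity), mul_add]
  -- product of the two series
  have hprod : (∑' m, A m) * (∑' n, B n) = ∑' q : ℕ × ℕ, A q.1 * B q.2 := by
    rw [ENNReal.tsum_prod']
    simp_rw [ENNReal.tsum_mul_left]
    rw [ENNReal.tsum_mul_right]
  -- regroup along antidiagonals
  have hre : (∑' q : ℕ × ℕ, A q.1 * B q.2) =
      ∑' N : ℕ, ∑ m ∈ Finset.range (N + 1), A m * B (N - m) := by
    rw [← Equiv.tsum_eq antidiagEquiv (fun q => A q.1 * B q.2)]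
    rw [ENNReal.tsum_sigma']
    congr 1
    ext N
    rw [tsum_fintype, ← Fin.sum_univ_eq_sum_range]
    rfl
  -- per-antidiagonal bound
  have hterm : ∀ N : ℕ, (∑ m ∈ Finset.range (N + 1), A m * B (N - m)) ≤
      matPow μ N x y * (u + v) ^ N / (N ! : ℝ≥0∞) := by
    intro N
    have hpow : (u + v) ^ N = ∑ m ∈ Finset.range (N + 1), u ^ m * v ^ (N - m) * (N.choose m) :=
      add_pow u v N
    rw [hpow, div_eq_mul_inv, Finset.mul_sum, Finset.sum_mul]
    apply Finset.sum_le_sum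
    intro m hmr
    have hm : m ≤ N := Nat.lt_succ_iff.mp (Finset.mem_range.mp hmr)
    have hmat : matPow μ m x z * matPow μ (N - m) z y ≤ matPow μ N x y := by
      have := le_matPow_add μ m (N - m) x z y
      rwa [Nat.add_sub_cancel' hm] at this
    calc A m * B (N - m)
        = (matPow μ m x z * matPow μ (N - m) z y) * (u ^ m * v ^ (N - m)) *
            (((m ! : ℝ≥0∞))⁻¹ * (((N - m)! : ℝ≥0∞))⁻¹) := by
          simp only [hA, hB, div_eq_mul_inv]; ring
      _ = (matPow μ m x z * matPow μ (N - m) z y) * (u ^ m * v ^ (N - m)) *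
            ((N.choose m : ℝ≥0∞) * ((N ! : ℝ≥0∞))⁻¹) := by rw [fact_inv_eq hm]
      _ ≤ matPow μ N x y * (u ^ m * v ^ (N - m)) *
            ((N.choose m : ℝ≥0∞) * ((N ! : ℝ≥0∞))⁻¹) := by
          gcongr
      _ = matPow μ N x y * (u ^ m * v ^ (N - m) * (N.choose m : ℝ≥0∞)) * ((N ! : ℝ≥0∞))⁻¹ := by
          ring
  calc Pker μ lam s x z * Pker μ lam t z y
      = ENNReal.ofReal (Real.exp (-(s + t))) * ((∑' m, A m) * (∑' n, B n)) := by
        rw [Pker, Pker, ← hE]; ring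
    _ = ENNReal.ofReal (Real.exp (-(s + t))) *
        ∑' N : ℕ, ∑ m ∈ Finset.range (N + 1), A m * B (N - m) := by rw [hprod, hre]
    _ ≤ ENNReal.ofReal (Real.exp (-(s + t))) *
        ∑' N : ℕ, matPow μ N x y * (u + v) ^ N / (N ! : ℝ≥0∞) := by
        gcongr with N
        exact hterm N
    _ = Pker μ lam (s + t) x y := by rw [Pker, huv]

lemma le_Pker {X : Type*} [DecidableEq X] (μ : X → X → ℝ≥0∞) (lam t : ℝ) (x y : X) (n : ℕ) :
    ENNReal.ofReal (Real.exp (-t)) *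
      (matPow μ n x y * ENNReal.ofReal (lam * t) ^ n / (n ! : ℝ≥0∞)) ≤ Pker μ lam t x y :=
  mul_le_mul_right (ENNReal.le_tsum n) _

lemma Pker_pos {X : Type*} [DecidableEq X] (μ : X → X → ℝ≥0∞) {lam t : ℝ}
    (hlam : 0 < lam) (ht : 0 < t) (hconn : ∀ x y, ∃ n, 0 < n ∧ 0 < matPow μ n x y)
    (x y : X) : 0 < Pker μ lam t x y := by
  obtain ⟨n, -, hpos⟩ := hconn x y
  refine lt_of_lt_of_le ?_ (le_Pker μ lam t x y n)
  apply ENNReal.mul_pos (ENNReal.ofReal_pos.mpr (Real.exp_pos _)).ne'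
  apply (ENNReal.div_pos _ (ENNReal.natCast_ne_top _)).ne'
  exact (ENNReal.mul_pos hpos.ne' (pow_ne_zero _ (ENNReal.ofReal_pos.mpr (by positivity)).ne')).ne'

lemma Pker_unbounded {X : Type*} [DecidableEq X] (μ : X → X → ℝ≥0∞) {lam : ℝ}
    (hlam : 0 < lam) (a b : X)
    (h : (Filter.limsup (fun n : ℕ => matPow μ n a b ^ (n : ℝ)⁻¹) Filter.atTop)⁻¹ <
      ENNReal.ofReal lam)
    (M : ℝ≥0∞) (hM : M ≠ ⊤) :
    ∃ t : ℝ, 0 < t ∧ M < Pker μ lam t a b := by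
  set L := Filter.limsup (fun n : ℕ => matPow μ n a b ^ (n : ℝ)⁻¹) Filter.atTop with hL
  have h1 : (ENNReal.ofReal lam)⁻¹ < L := by
    have := ENNReal.inv_lt_inv.mpr h
    rwa [inv_inv] at this
  obtain ⟨c, hc1, hc2⟩ := exists_between h1
  have hct : c ≠ ⊤ := hc2.ne_top
  have hc0 : c ≠ 0 := by
    have : (0:ℝ≥0∞) < (ENNReal.ofReal lam)⁻¹ := ENNReal.inv_pos.mpr ENNReal.ofReal_ne_top
    exact (this.trans hc1).ne'
  set q := c.toReal with hq
  have hq0 : 0 < q := ENNReal.toReal_pos hc0 hct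
  have hcq : ENNReal.ofReal q = c := ENNReal.ofReal_toReal hct
  have hqlam : 1 < lam * q := by
    have h2 : ENNReal.ofReal lam * (ENNReal.ofReal lam)⁻¹ < ENNReal.ofReal lam * c :=
      (ENNReal.mul_lt_mul_right (ENNReal.ofReal_pos.mpr hlam).ne' ENNReal.ofReal_ne_top) hc1
    rw [ENNReal.mul_inv_cancel (ENNReal.ofReal_pos.mpr hlam).ne' ENNReal.ofReal_ne_top] at h2
    have h3 : (1:ℝ≥0∞) < ENNReal.ofReal (lam * q) := by
      rwa [ENNReal.ofReal_mul hlam.le, hcq]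
    have := (ENNReal.lt_ofReal_iff_toReal_lt (by simp)).mp h3
    simpa using this
  set δ : ℝ := 1 - 1/(lam * q) with hδ
  have hδ0 : 0 < δ := by
    rw [hδ]
    have : 1/(lam*q) < 1 := by
      rw [div_lt_one (by positivity)]; exact hqlam
    linarith
  -- frequently large matrix powers
  have hfreq : ∃ᶠ n in atTop, c < matPow μ n a b ^ (n : ℝ)⁻¹ :=
    frequently_lt_of_lt_limsup (by isBoundedDefault) hc2
  -- eventual largeness of the lower bound
  have htend : Tendsto (fun x : ℝ => Real.exp (δ * x - 1) / x) atTop atTop := by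
    have h1' : Tendsto (fun x : ℝ => Real.exp (δ * x) / (δ * x)) atTop atTop := by
      have := (Real.tendsto_exp_div_pow_atTop 1).comp
        (tendsto_id.const_mul_atTop hδ0 : Tendsto (fun x : ℝ => δ * x) atTop atTop)
      simpa [Function.comp_def] using this
    have h2' : Tendsto (fun x : ℝ => Real.exp (δ * x) / x) atTop atTop := by
      have := h1'.const_mul_atTop hδ0
      apply this.congr'
      filter_upwards [eventually_gt_atTop (0:ℝ)] with x hx
      field_simp
    have h3' := h2'.atTop_mul_const (Real.exp_pos (-1))
    apply h3'.congr
    intro x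
    rw [div_mul_eq_mul_div, ← Real.exp_add]
    ring_nf
  have htendn : Tendsto (fun n : ℕ => Real.exp (δ * n - 1) / n) atTop atTop :=
    htend.comp tendsto_natCast_atTop_atTop
  have hev : ∀ᶠ n : ℕ in atTop, M.toReal < Real.exp (δ * n - 1) / n ∧ 1 ≤ n :=
    (htendn.eventually_gt_atTop M.toReal).and (eventually_ge_atTop 1)
  obtain ⟨n, hcn, hMn, hn1⟩ := (hfreq.and_eventually hev).exists
  have hnR : (0:ℝ) < n := by exact_mod_cast hn1
  refine ⟨n / (lam * q), by positivity, ?_⟩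
  set t : ℝ := n / (lam * q) with htdef
  -- single-term lower bound
  have hpow : c ^ n ≤ matPow μ n a b := by
    have hne : (n : ℝ) ≠ 0 := hnR.ne'
    have h' := ENNReal.rpow_lt_rpow hcn (by exact_mod_cast hnR : (0:ℝ) < (n:ℝ))
    rw [← ENNReal.rpow_mul, inv_mul_cancel₀ hne, ENNReal.rpow_one, ENNReal.rpow_natCast] at h'
    exact h'.le
  have hkey : (c * ENNReal.ofReal (lam * t)) = ENNReal.ofReal (n : ℝ) := by
    rw [← hcq, ← ENNReal.ofReal_mul hq0.le]
    congr 1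
    rw [htdef]
    field_simp
  have hterm : ENNReal.ofReal (Real.exp (δ * n - 1) / n) ≤ Pker μ lam t a b := by
    refine le_trans ?_ (le_Pker μ lam t a b n)
    have hfac : ((n ! : ℝ≥0∞)) = ENNReal.ofReal (n ! : ℝ) := by
      rw [ENNReal.ofReal_natCast]
    have step1 : ENNReal.ofReal ((n:ℝ) ^ n / (n ! : ℝ)) ≤
        matPow μ n a b * ENNReal.ofReal (lam * t) ^ n / (n ! : ℝ≥0∞) := by
      have : (ENNReal.ofReal (n:ℝ)) ^ n ≤ matPow μ n a b * ENNReal.ofReal (lam * t) ^ n := by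
        calc (ENNReal.ofReal (n:ℝ)) ^ n = (c * ENNReal.ofReal (lam * t)) ^ n := by rw [hkey]
          _ = c ^ n * ENNReal.ofReal (lam * t) ^ n := mul_pow _ _ _
          _ ≤ matPow μ n a b * ENNReal.ofReal (lam * t) ^ n := by gcongr
      calc ENNReal.ofReal ((n:ℝ) ^ n / (n ! : ℝ)) =
            ENNReal.ofReal ((n:ℝ) ^ n) / ENNReal.ofReal (n ! : ℝ) := by
            rw [ENNReal.ofReal_div_of_pos (by positivity)]
        _ = (ENNReal.ofReal (n:ℝ)) ^ n / (n ! : ℝ≥0∞) := by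
            rw [ENNReal.ofReal_pow (by positivity), hfac]
        _ ≤ matPow μ n a b * ENNReal.ofReal (lam * t) ^ n / (n ! : ℝ≥0∞) := by gcongr
    have step2 : Real.exp (δ * n - 1) / n = Real.exp (-t) * (Real.exp ((n:ℝ) - 1) / n) := by
      have hee : Real.exp (-t) * Real.exp ((n:ℝ) - 1) = Real.exp (δ * n - 1) := by
        rw [← Real.exp_add]
        congr 1
        rw [htdef, hδ]
        field_simp
        ring
      rw [← hee]
      ring
    have step3 : Real.exp ((n:ℝ) - 1) / n ≤ (n:ℝ) ^ n / (n ! : ℝ) := by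
      have hf := fact_mul_exp_le n hn1
      rw [div_le_div_iff₀ hnR (by positivity)]
      calc Real.exp ((n:ℝ) - 1) * (n ! : ℝ) ≤ (n:ℝ) ^ (n + 1) := by
            rw [mul_comm]; exact hf
        _ = (n:ℝ) ^ n * n := by rw [pow_succ]
    calc ENNReal.ofReal (Real.exp (δ * n - 1) / n)
        = ENNReal.ofReal (Real.exp (-t)) * ENNReal.ofReal (Real.exp ((n:ℝ) - 1) / n) := by
          rw [step2, ENNReal.ofReal_mul (Real.exp_pos _).le]
      _ ≤ ENNReal.ofReal (Real.exp (-t)) * ENNReal.ofReal ((n:ℝ) ^ n / (n ! : ℝ)) := by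
          gcongr
      _ ≤ ENNReal.ofReal (Real.exp (-t)) *
            (matPow μ n a b * ENNReal.ofReal (lam * t) ^ n / (n ! : ℝ≥0∞)) := by
          gcongr
  calc M < ENNReal.ofReal (Real.exp (δ * n - 1) / n) :=
        (ENNReal.lt_ofReal_iff_toReal_lt hM).mpr hMn
    _ ≤ Pker μ lam t a b := hterm

theorem exists_time_expected_particles_gt_one'
    {X : Type*} [Countable X] [DecidableEq X]
    (μ : X → X → ℝ≥0∞) (hconn : ∀ x y, ∃ n, 0 < n ∧ 0 < matPow μ n x y)
    (lam : ℝ) (hlam : 0 < lam)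
    (hsup : ∀ a b : X,
      (Filter.limsup (fun n : ℕ => matPow μ n a b ^ (n : ℝ)⁻¹) Filter.atTop)⁻¹ <
        ENNReal.ofReal lam)
    (l : ℕ) (xs ys : Fin (l + 1) → X) :
    ∃ t : ℝ, 0 < t ∧ ∀ j : Fin (l + 1),
      1 < Pker μ lam t (xs j) (ys j) := by
  set a := xs 0 with ha
  have hc : ∀ j, 0 < Pker μ lam 1 (xs j) a := fun j => Pker_pos μ hlam one_pos hconn _ _
  have hd : ∀ j, 0 < Pker μ lam 1 a (ys j) := fun j => Pker_pos μ hlam one_pos hconn _ _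
  set M : ℝ≥0∞ :=
    ∑ j : Fin (l + 1), (Pker μ lam 1 (xs j) a * Pker μ lam 1 a (ys j))⁻¹ with hMdef
  have hMt : M ≠ ⊤ := by
    rw [hMdef]
    refine (ENNReal.sum_lt_top.mpr fun j _ => ?_).ne
    exact ENNReal.inv_lt_top.mpr (ENNReal.mul_pos (hc j).ne' (hd j).ne')
  obtain ⟨t', ht', hMt'⟩ := Pker_unbounded μ hlam a a (hsup a a) M hMt
  refine ⟨1 + (t' + 1), by linarith, fun j => ?_⟩
  set cj := Pker μ lam 1 (xs j) a with hcj
  set dj := Pker μ lam 1 a (ys j) with hdj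
  have chap1 : Pker μ lam t' a a * dj ≤ Pker μ lam (t' + 1) a (ys j) :=
    Pker_chapman μ lam hlam.le ht'.le zero_le_one a a (ys j)
  have chap2 : cj * Pker μ lam (t' + 1) a (ys j) ≤ Pker μ lam (1 + (t' + 1)) (xs j) (ys j) :=
    Pker_chapman μ lam hlam.le zero_le_one (by linarith) (xs j) a (ys j)
  have hlow : Pker μ lam t' a a * (cj * dj) ≤ Pker μ lam (1 + (t' + 1)) (xs j) (ys j) := by
    calc Pker μ lam t' a a * (cj * dj) = cj * (Pker μ lam t' a a * dj) := by ring
      _ ≤ cj * Pker μ lam (t' + 1) a (ys j) := mul_le_mul_right chap1 _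
      _ ≤ _ := chap2
  have hMj : (cj * dj)⁻¹ ≤ M :=
    Finset.single_le_sum (f := fun j : Fin (l+1) =>
      (Pker μ lam 1 (xs j) a * Pker μ lam 1 a (ys j))⁻¹)
      (fun i _ => by positivity) (Finset.mem_univ j)
  have hv0 : cj * dj ≠ 0 := (ENNReal.mul_pos (hc j).ne' (hd j).ne').ne'
  have h1 : 1 < Pker μ lam t' a a * (cj * dj) := by
    by_cases hvt : cj * dj = ⊤
    · rw [hvt, ENNReal.mul_top (Pker_pos μ hlam ht' hconn a a).ne']
      exact ENNReal.one_lt_top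
    · calc (1:ℝ≥0∞) = (cj * dj)⁻¹ * (cj * dj) := (ENNReal.inv_mul_cancel hv0 hvt).symm
        _ ≤ M * (cj * dj) := mul_le_mul_left hMj _
        _ < Pker μ lam t' a a * (cj * dj) := (ENNReal.mul_lt_mul_left hv0 hvt) hMt'
  exact h1.trans_le hlow

end Aux

/-- Lemma 5.4: on a connected weighted graph with bounded row sums, if
`λ > R_μ`, then for any finite collection of pairs `(x_j, y_j)` there is a common time
`t > 0` at which the expected number of particles at `y_j` (starting from one particle
at `x_j`) exceeds `1` for every `j`. -/

theorem exists_time_expected_particles_gt_one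
    {X : Type*} [Countable X] [DecidableEq X]
    (μ : X → X → ℝ≥0∞) (hbdd : bddRows μ) (hconn : connectedW μ)
    (lam : ℝ) (hlam : 0 < lam)
    (hsup : ∀ a b : X, convR μ a b < ENNReal.ofReal lam)
    (l : ℕ) (xs ys : Fin (l + 1) → X) :
    ∃ t : ℝ, 0 < t ∧ ∀ j : Fin (l + 1),
      1 < ENNReal.ofReal (Real.exp (-t)) *
        ∑' n : ℕ, matPow μ n (xs j) (ys j) * ENNReal.ofReal (lam * t) ^ n /
          (Nat.factorial n : ℝ≥0∞) := by
  obtain ⟨t, ht, hj⟩ := exists_time_expected_particles_gt_one' μ hconn lam hlam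
    (fun a b => by simpa [convR, lsRoot] using hsup a b) l xs ys
  exact ⟨t, ht, fun j => hj j⟩
end
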